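/- The function η(q) := (q²K(q) − K(q) + E(q))/√(2q² − 1) is strictly decreasing on (1/√2, q*), where q* is the unique zero of 2E − K; indeed η'(q) = −q(2E(q) − K(q))/(2q²−1)^{3/2} < 0 on that interval. -/

import Mathlib

open Real Set Filter

noncomputable def Kc (q : ℝ) : ℝ := ∫ θ in (0:ℝ)..(π/2), 1 / Real.sqrt (1 - q^2 * Real.sin θ^2)

noncomputable def Ec (q : ℝ) : ℝ := ∫ θ in (0:ℝ)..(π/2), Real.sqrt (1 - q^2 * Real.sin θ^2)

noncomputable def fc (q : ℝ) : ℝ := (4*q^4 - 5*q^2 + 1) * Kc q + (-8*q^4 + 8*q^2 - 1) * Ec q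


noncomputable def etac (q : ℝ) : ℝ := (q^2 * Kc q - Kc q + Ec q) / Real.sqrt (2*q^2 - 1)

open MeasureTheory intervalIntegral

lemma g_pos {x : ℝ} (hx : x^2 < 1) (θ : ℝ) : 0 < 1 - x^2 * Real.sin θ^2 := by
  nlinarith [Real.sin_sq_le_one θ, sq_nonneg x, sq_nonneg (Real.sin θ)]

lemma sqrtg_pos {x : ℝ} (hx : x^2 < 1) (θ : ℝ) : 0 < Real.sqrt (1 - x^2 * Real.sin θ^2) :=
  Real.sqrt_pos.2 (g_pos hx θ)

lemma cont_sqrtg {x : ℝ} : Continuous fun θ : ℝ => Real.sqrt (1 - x^2 * Real.sin θ^2) := by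
  fun_prop

lemma cont_inv_sqrtg {x : ℝ} (hx : x^2 < 1) :
    Continuous fun θ : ℝ => 1 / Real.sqrt (1 - x^2 * Real.sin θ^2) :=
  continuous_const.div cont_sqrtg fun θ => (sqrtg_pos hx θ).ne'

lemma cont_inv_cube {x : ℝ} (hx : x^2 < 1) :
    Continuous fun θ : ℝ => 1 / (Real.sqrt (1 - x^2 * Real.sin θ^2))^3 :=
  continuous_const.div (cont_sqrtg.pow 3) fun θ => pow_ne_zero _ (sqrtg_pos hx θ).ne'

lemma hasDerivAt_aux {x : ℝ} (hx : x^2 < 1) (θ : ℝ) :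
    HasDerivAt (fun t => x^2 * Real.sin t * Real.cos t / Real.sqrt (1 - x^2 * Real.sin t^2))
      (Real.sqrt (1 - x^2 * Real.sin θ^2) -
        (1-x^2) * (1 / (Real.sqrt (1 - x^2 * Real.sin θ^2))^3)) θ := by
  have hg : 0 < 1 - x^2 * Real.sin θ^2 := g_pos hx θ
  have hs : 0 < Real.sqrt (1 - x^2 * Real.sin θ^2) := Real.sqrt_pos.2 hg
  have h1 : HasDerivAt (fun t => x^2 * Real.sin t) (x^2 * Real.cos θ) θ :=
    (Real.hasDerivAt_sin θ).const_mul _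
  have h2 := h1.mul (Real.hasDerivAt_cos θ)
  have h3 := (((Real.hasDerivAt_sin θ).pow 2).const_mul (x^2)).const_sub 1
  have h4 := h3.sqrt hg.ne'
  have h5 := h2.div h4 hs.ne'
  refine h5.congr_deriv ?_
  symm
  set u := Real.sqrt (1 - x^2 * Real.sin θ^2) with hudef
  have hu : u^2 = 1 - x^2 * Real.sin θ^2 := Real.sq_sqrt hg.le
  have hc : Real.cos θ ^ 2 = 1 - Real.sin θ^2 := Real.cos_sq' θ
  simp only [Pi.mul_apply, Pi.div_apply, Pi.pow_apply]
  field_simp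
  linear_combination (2*u^3) * (u^2 + (1 - x^2*Real.sin θ^2) - x^2*(1-2*Real.sin θ^2)) * hu + (2*u^3) * (-(x^2*u^2) - x^4*Real.sin θ^2) * hc

lemma int_cube {x : ℝ} (hx : x^2 < 1) :
    ∫ θ in (0:ℝ)..(π/2), 1 / (Real.sqrt (1 - x^2 * Real.sin θ^2))^3 = Ec x / (1-x^2) := by
  have hx1 : (0:ℝ) < 1 - x^2 := by linarith
  have hI1 : IntervalIntegrable (fun θ => Real.sqrt (1 - x^2 * Real.sin θ^2))
      volume 0 (π/2) := cont_sqrtg.intervalIntegrable _ _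
  have hI3 : IntervalIntegrable (fun θ => 1 / (Real.sqrt (1 - x^2 * Real.sin θ^2))^3)
      volume 0 (π/2) := (cont_inv_cube hx).intervalIntegrable _ _
  have key := integral_eq_sub_of_hasDerivAt (a := 0) (b := π/2)
      (f := fun t => x^2 * Real.sin t * Real.cos t / Real.sqrt (1 - x^2 * Real.sin t^2))
      (fun θ _ => hasDerivAt_aux hx θ)
      (hI1.sub (hI3.const_mul (1 - x^2)))
  norm_num [Real.sin_pi_div_two] at key
  simp only [one_div] at hI3 ⊢
  rw [integral_sub hI1 (hI3.const_mul (1-x^2)), intervalIntegral.integral_const_mul] at key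
  have hEc : Ec x = (1-x^2) * ∫ θ in (0:ℝ)..(π/2), (Real.sqrt (1 - x^2 * Real.sin θ^2) ^ 3)⁻¹ := by
    rw [Ec]; linarith
  rw [hEc]
  field_simp

lemma sq_sqrtg {x : ℝ} (hx : x^2 < 1) (θ : ℝ) :
    Real.sqrt (1 - x^2 * Real.sin θ^2) ^ 2 = 1 - x^2 * Real.sin θ^2 :=
  Real.sq_sqrt (g_pos hx θ).le

lemma ball_sq_lt {x y : ℝ} (hx : x ∈ Ioo (0:ℝ) 1) (hy : y ∈ Metric.ball x ((1-x)/2)) :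
    y^2 < ((1+x)/2)^2 ∧ ((1+x)/2)^2 < 1 := by
  obtain ⟨hx0, hx1⟩ := hx
  rw [Metric.mem_ball, Real.dist_eq, abs_lt] at hy
  constructor
  · apply sq_lt_sq' <;> nlinarith [hy.1, hy.2]
  · nlinarith

lemma hasDerivAt_sqrtg {y : ℝ} (hy : y^2 < 1) (θ : ℝ) :
    HasDerivAt (fun z => Real.sqrt (1 - z^2 * Real.sin θ^2))
      (-(y * Real.sin θ^2) / Real.sqrt (1 - y^2 * Real.sin θ^2)) y := by
  have hg : 0 < 1 - y^2 * Real.sin θ^2 := g_pos hy θ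
  have h3 := (((hasDerivAt_pow 2 y).mul_const (Real.sin θ^2)).const_sub 1).sqrt hg.ne'
  convert h3 using 1
  have hs := Real.sqrt_pos.2 hg
  field_simp
  ring

lemma hasDerivAt_Ec {x : ℝ} (hx : x ∈ Ioo (0:ℝ) 1) :
    HasDerivAt Ec ((Ec x - Kc x) / x) x := by
  obtain ⟨hx0, hx1⟩ := hx
  have hx2 : x^2 < 1 := by nlinarith
  set r : ℝ := (1+x)/2 with hrdef
  have hr2 : r^2 < 1 := by rw [hrdef]; nlinarith
  have hrg : (0:ℝ) < 1 - r^2 := by linarith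
  have hder := intervalIntegral.hasDerivAt_integral_of_dominated_loc_of_deriv_le
    (F := fun y θ => Real.sqrt (1 - y^2 * Real.sin θ^2))
    (F' := fun y θ => -(y * Real.sin θ^2) / Real.sqrt (1 - y^2 * Real.sin θ^2))
    (x₀ := x) (a := 0) (b := π/2) (μ := volume)
    (bound := fun _ => r / Real.sqrt (1 - r^2))
    (Metric.ball_mem_nhds x (show (0:ℝ) < (1-x)/2 by linarith))
    (Eventually.of_forall fun y => cont_sqrtg.aestronglyMeasurable)
    (cont_sqrtg.intervalIntegrable _ _)
    (((continuous_const.mul (Real.continuous_sin.pow 2)).neg.div cont_sqrtg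
        fun θ => (sqrtg_pos hx2 θ).ne').aestronglyMeasurable)
    (Eventually.of_forall fun θ _ y hy => by
      obtain ⟨hy2, _⟩ := ball_sq_lt ⟨hx0, hx1⟩ hy
      have hyr : y^2 < r^2 := hy2
      have hy1 : y^2 < 1 := lt_trans hyr hr2
      have hgy : 0 < 1 - y^2 * Real.sin θ^2 := g_pos hy1 θ
      have hd1 : Real.sqrt (1 - r^2) ≤ Real.sqrt (1 - y^2 * Real.sin θ^2) := by
        apply Real.sqrt_le_sqrt
        nlinarith [Real.sin_sq_le_one θ, sq_nonneg (Real.sin θ)]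
      have hd0 : 0 < Real.sqrt (1 - r^2) := Real.sqrt_pos.2 hrg
      rw [norm_div, Real.norm_eq_abs, Real.norm_eq_abs,
        abs_of_pos (Real.sqrt_pos.2 hgy)]
      apply div_le_div₀ (by positivity) ?_ hd0 hd1
      have : |(-(y * Real.sin θ^2))| = |y| * Real.sin θ^2 := by
        rw [abs_neg, abs_mul, abs_of_nonneg (sq_nonneg (Real.sin θ))]
      rw [this]
      have hyabs : |y| ≤ r := by
        have h := Metric.mem_ball.1 hy
        rw [Real.dist_eq] at h
        have h2 := abs_sub_abs_le_abs_sub y x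
        rw [abs_of_pos hx0] at h2
        rw [hrdef]; linarith
      calc |y| * Real.sin θ^2 ≤ |y| * 1 := by
            nlinarith [Real.sin_sq_le_one θ, abs_nonneg y]
        _ = |y| := mul_one _
        _ ≤ r := hyabs)
    (intervalIntegrable_const)
    (Eventually.of_forall fun θ _ y hy => by
      obtain ⟨hy2, _⟩ := ball_sq_lt ⟨hx0, hx1⟩ hy
      exact hasDerivAt_sqrtg (lt_trans hy2 hr2) θ)
  obtain ⟨-, hder⟩ := hder
  have heq : (∫ θ in (0:ℝ)..(π/2), -(x * Real.sin θ^2) / Real.sqrt (1 - x^2 * Real.sin θ^2))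
      = (Ec x - Kc x) / x := by
    have hptwise : ∀ θ : ℝ, -(x * Real.sin θ^2) / Real.sqrt (1 - x^2 * Real.sin θ^2)
        = (1/x) * (Real.sqrt (1 - x^2 * Real.sin θ^2) - 1 / Real.sqrt (1 - x^2 * Real.sin θ^2)) := by
      intro θ
      have hs := sqrtg_pos hx2 θ
      have hu := sq_sqrtg hx2 θ
      field_simp
      linear_combination (-1) * hu
    rw [intervalIntegral.integral_congr (g := fun θ => (1/x) * (Real.sqrt (1 - x^2 * Real.sin θ^2) - 1 / Real.sqrt (1 - x^2 * Real.sin θ^2))) (fun θ _ => hptwise θ),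
      intervalIntegral.integral_const_mul,
      intervalIntegral.integral_sub (cont_sqrtg.intervalIntegrable _ _)
        ((cont_inv_sqrtg hx2).intervalIntegrable _ _)]
    rw [Ec, Kc]; ring
  rw [heq] at hder
  exact hder

lemma hasDerivAt_inv_sqrtg {y : ℝ} (hy : y^2 < 1) (θ : ℝ) :
    HasDerivAt (fun z => 1 / Real.sqrt (1 - z^2 * Real.sin θ^2))
      (y * Real.sin θ^2 / (Real.sqrt (1 - y^2 * Real.sin θ^2))^3) y := by
  have hg : 0 < 1 - y^2 * Real.sin θ^2 := g_pos hy θ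
  have hs := Real.sqrt_pos.2 hg
  have h := (hasDerivAt_sqrtg hy θ).inv hs.ne'
  have hu : Real.sqrt (1 - y^2 * Real.sin θ^2) ^ 2 = 1 - y^2 * Real.sin θ^2 :=
    Real.sq_sqrt hg.le
  simp only [one_div]
  refine h.congr_deriv ?_
  symm
  field_simp

lemma hasDerivAt_Kc {x : ℝ} (hx : x ∈ Ioo (0:ℝ) 1) :
    HasDerivAt Kc ((Ec x / (1-x^2) - Kc x) / x) x := by
  obtain ⟨hx0, hx1⟩ := hx
  have hx2 : x^2 < 1 := by nlinarith
  set r : ℝ := (1+x)/2 with hrdef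
  have hr2 : r^2 < 1 := by rw [hrdef]; nlinarith
  have hrg : (0:ℝ) < 1 - r^2 := by linarith
  have hder := intervalIntegral.hasDerivAt_integral_of_dominated_loc_of_deriv_le
    (F := fun y θ => 1 / Real.sqrt (1 - y^2 * Real.sin θ^2))
    (F' := fun y θ => y * Real.sin θ^2 / (Real.sqrt (1 - y^2 * Real.sin θ^2))^3)
    (x₀ := x) (a := 0) (b := π/2) (μ := volume)
    (bound := fun _ => r / (Real.sqrt (1 - r^2))^3)
    (Metric.ball_mem_nhds x (show (0:ℝ) < (1-x)/2 by linarith))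
    ?meas (( cont_inv_sqrtg hx2).intervalIntegrable _ _)
    (((continuous_const.mul (Real.continuous_sin.pow 2)).div (cont_sqrtg.pow 3)
        fun θ => pow_ne_zero _ (sqrtg_pos hx2 θ).ne').aestronglyMeasurable)
    ?bound intervalIntegrable_const ?diff
  case meas =>
    filter_upwards with y
    by_cases hy : y^2 < 1
    · exact (cont_inv_sqrtg hy).aestronglyMeasurable
    · exact (Measurable.div measurable_const (cont_sqrtg.measurable)).aestronglyMeasurable
  case bound =>
    filter_upwards with θ _ y hy
    obtain ⟨hy2, _⟩ := ball_sq_lt ⟨hx0, hx1⟩ hy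
    have hyr : y^2 < r^2 := hy2
    have hy1 : y^2 < 1 := lt_trans hyr hr2
    have hgy : 0 < 1 - y^2 * Real.sin θ^2 := g_pos hy1 θ
    have hd1 : Real.sqrt (1 - r^2) ≤ Real.sqrt (1 - y^2 * Real.sin θ^2) := by
      apply Real.sqrt_le_sqrt
      nlinarith [Real.sin_sq_le_one θ, sq_nonneg (Real.sin θ)]
    have hd0 : 0 < Real.sqrt (1 - r^2) := Real.sqrt_pos.2 hrg
    have hyabs : |y| ≤ r := by
      have h := Metric.mem_ball.1 hy
      rw [Real.dist_eq] at h
      have h2 := abs_sub_abs_le_abs_sub y x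
      rw [abs_of_pos hx0] at h2
      rw [hrdef]; linarith
    rw [norm_div, Real.norm_eq_abs, Real.norm_eq_abs,
      abs_of_pos (pow_pos (Real.sqrt_pos.2 hgy) 3)]
    apply div_le_div₀ (by positivity) ?_ (by positivity) (pow_le_pow_left₀ hd0.le hd1 3)
    rw [abs_mul, abs_of_nonneg (sq_nonneg (Real.sin θ))]
    calc |y| * Real.sin θ^2 ≤ |y| * 1 := by
          nlinarith [Real.sin_sq_le_one θ, abs_nonneg y]
      _ = |y| := mul_one _
      _ ≤ r := hyabs
  case diff =>
    filter_upwards with θ _ y hy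
    obtain ⟨hy2, _⟩ := ball_sq_lt ⟨hx0, hx1⟩ hy
    exact hasDerivAt_inv_sqrtg (lt_trans hy2 hr2) θ
  obtain ⟨-, hder⟩ := hder
  have heq : (∫ θ in (0:ℝ)..(π/2), x * Real.sin θ^2 / (Real.sqrt (1 - x^2 * Real.sin θ^2))^3)
      = (Ec x / (1-x^2) - Kc x) / x := by
    have hptwise : ∀ θ : ℝ, x * Real.sin θ^2 / (Real.sqrt (1 - x^2 * Real.sin θ^2))^3
        = (1/x) * (1 / (Real.sqrt (1 - x^2 * Real.sin θ^2))^3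
            - 1 / Real.sqrt (1 - x^2 * Real.sin θ^2)) := by
      intro θ
      have hs := sqrtg_pos hx2 θ
      have hu := sq_sqrtg hx2 θ
      field_simp
      linear_combination hu
    rw [intervalIntegral.integral_congr (fun θ _ => hptwise θ),
      intervalIntegral.integral_const_mul,
      intervalIntegral.integral_sub ((cont_inv_cube hx2).intervalIntegrable _ _)
        ((cont_inv_sqrtg hx2).intervalIntegrable _ _),
      int_cube hx2, Kc]
    ring
  rw [heq] at hder
  exact hder

lemma Kc_pos {x : ℝ} (hx : x^2 < 1) : 0 < Kc x := by
  have h : ∫ θ in (0:ℝ)..(π/2), (1:ℝ) ≤ Kc x := by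
    apply intervalIntegral.integral_mono_on (by positivity)
      intervalIntegrable_const ((cont_inv_sqrtg hx).intervalIntegrable _ _)
    intro θ _
    rw [le_div_iff₀ (sqrtg_pos hx θ), one_mul]
    exact Real.sqrt_le_one.2 (by nlinarith [sq_nonneg x, sq_nonneg (Real.sin θ)])
  simp only [intervalIntegral.integral_const, smul_eq_mul, mul_one, sub_zero] at h
  linarith [pi_pos]

lemma Ec_pos {x : ℝ} (hx : x^2 < 1) : 0 < Ec x := by
  have h : ∫ θ in (0:ℝ)..(π/2), Real.sqrt (1 - x^2) ≤ Ec x := by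
    apply intervalIntegral.integral_mono_on (by positivity)
      intervalIntegrable_const (cont_sqrtg.intervalIntegrable _ _)
    intro θ _
    apply Real.sqrt_le_sqrt
    nlinarith [Real.sin_sq_le_one θ, sq_nonneg x, sq_nonneg (Real.sin θ)]
  simp only [intervalIntegral.integral_const, smul_eq_mul, sub_zero] at h
  have : 0 < π/2 * Real.sqrt (1 - x^2) := by
    apply mul_pos (by linarith [pi_pos]) (Real.sqrt_pos.2 (by nlinarith))
  linarith

lemma hasDerivAt_G {x : ℝ} (hx : x ∈ Ioo (0:ℝ) 1) :
    HasDerivAt (fun t => 2 * Ec t - Kc t)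
      (2 * ((Ec x - Kc x)/x) - (Ec x / (1-x^2) - Kc x)/x) x :=
  ((hasDerivAt_Ec hx).const_mul 2).sub (hasDerivAt_Kc hx)

lemma G_deriv_neg {x : ℝ} (hx : x ∈ Ioo (0:ℝ) 1) (hx2 : 1/2 < x^2) :
    2 * ((Ec x - Kc x)/x) - (Ec x / (1-x^2) - Kc x)/x < 0 := by
  obtain ⟨hx0, hx1⟩ := hx
  have hxx : x^2 < 1 := by nlinarith
  have hE := Ec_pos hxx
  have hK := Kc_pos hxx
  have h1 : (0:ℝ) < 1 - x^2 := by linarith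
  have heq : 2 * ((Ec x - Kc x)/x) - (Ec x / (1-x^2) - Kc x)/x
      = ((1 - 2*x^2) * Ec x - (1-x^2) * Kc x) / (x * (1-x^2)) := by
    field_simp
    ring
  rw [heq]
  apply div_neg_of_neg_of_pos
  · nlinarith
  · positivity

lemma rpow_three_half {t : ℝ} (ht : 0 ≤ t) : t ^ ((3:ℝ)/2) = (Real.sqrt t)^3 := by
  rw [show ((3:ℝ)/2) = (1/2) * (3:ℕ) by norm_num, Real.rpow_mul ht, Real.rpow_natCast,
    ← Real.sqrt_eq_rpow]

lemma etac_deriv {x : ℝ} (hx0 : 0 < x) (hx1 : x < 1) (hx2 : 1/2 < x^2) :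
    HasDerivAt etac (-(x * (2 * Ec x - Kc x)) / (2*x^2 - 1) ^ ((3:ℝ)/2)) x := by
  have hxx : x^2 < 1 := by nlinarith
  have hK := hasDerivAt_Kc ⟨hx0, hx1⟩
  have hE := hasDerivAt_Ec ⟨hx0, hx1⟩
  have hgg : (0:ℝ) < 2*x^2 - 1 := by linarith
  have hN := (((hasDerivAt_pow 2 x).mul hK).sub hK).add hE
  have hD := (((hasDerivAt_pow 2 x).const_mul 2).sub_const 1).sqrt hgg.ne'
  have hspos := Real.sqrt_pos.2 hgg
  have hu : Real.sqrt (2*x^2-1)^2 = 2*x^2-1 := Real.sq_sqrt hgg.le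
  have h := hN.div hD hspos.ne'
  have hfun : etac = fun t => (t^2 * Kc t - Kc t + Ec t) / Real.sqrt (2*t^2 - 1) := rfl
  rw [hfun]
  refine h.congr_deriv ?_
  symm
  rw [rpow_three_half hgg.le]
  have h1 : (0:ℝ) < 1 - x^2 := by linarith
  set u := Real.sqrt (2*x^2-1) with hudef
  simp only [Pi.mul_apply, Pi.add_apply, Pi.sub_apply]
  field_simp
  linear_combination (Kc x*(x^4-x^2)) * hu

theorem stmt_16 (qstar : ℝ) (hqs : qstar ∈ Ioo (0:ℝ) 1) (hqs0 : 2 * Ec qstar = Kc qstar) :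
    StrictAntiOn etac (Ioo (1 / Real.sqrt 2) qstar) ∧
    ∀ q ∈ Ioo (1 / Real.sqrt 2) qstar,
      HasDerivAt etac (-(q * (2 * Ec q - Kc q)) / (2*q^2 - 1) ^ ((3:ℝ)/2)) q ∧
      -(q * (2 * Ec q - Kc q)) / (2*q^2 - 1) ^ ((3:ℝ)/2) < 0 := by
  obtain ⟨hqs0', hqs1⟩ := hqs
  have hs2 : (0:ℝ) < 1/Real.sqrt 2 := by positivity
  have h2 : ((1:ℝ)/Real.sqrt 2)^2 = 1/2 := by
    rw [div_pow, one_pow, Real.sq_sqrt (by norm_num : (0:ℝ) ≤ 2)]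
  have key : ∀ q ∈ Ioo (1/Real.sqrt 2) qstar,
      HasDerivAt etac (-(q * (2 * Ec q - Kc q)) / (2*q^2 - 1) ^ ((3:ℝ)/2)) q ∧
      -(q * (2 * Ec q - Kc q)) / (2*q^2 - 1) ^ ((3:ℝ)/2) < 0 := by
    rintro q ⟨hq1, hq2⟩
    have hq0 : 0 < q := lt_trans hs2 hq1
    have hqlt1 : q < 1 := lt_trans hq2 hqs1
    have hqsq : 1/2 < q^2 := by nlinarith
    have hGanti : StrictAntiOn (fun t => 2 * Ec t - Kc t) (Icc q qstar) := by
      apply strictAntiOn_of_deriv_neg (convex_Icc q qstar)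
      · intro t ht
        have ht1 : 0 < t := lt_of_lt_of_le hq0 ht.1
        have ht2 : t < 1 := lt_of_le_of_lt ht.2 hqs1
        exact (hasDerivAt_G ⟨ht1, ht2⟩).continuousAt.continuousWithinAt
      · intro t ht
        rw [interior_Icc] at ht
        have ht1 : 0 < t := lt_trans hq0 ht.1
        have ht2 : t < 1 := lt_trans ht.2 hqs1
        rw [(hasDerivAt_G ⟨ht1, ht2⟩).deriv]
        exact G_deriv_neg ⟨ht1, ht2⟩ (by nlinarith [ht.1])
    have hGpos : 0 < 2 * Ec q - Kc q := by
      have h := hGanti ⟨le_refl q, hq2.le⟩ ⟨hq2.le, le_refl qstar⟩ hq2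
      simp only at h
      linarith
    have hd := etac_deriv hq0 hqlt1 hqsq
    refine ⟨hd, ?_⟩
    apply div_neg_of_neg_of_pos
    · nlinarith
    · exact Real.rpow_pos_of_pos (by linarith) _
  refine ⟨?_, key⟩
  apply strictAntiOn_of_deriv_neg (convex_Ioo _ _)
  · exact fun x hx => ((key x hx).1).continuousAt.continuousWithinAt
  · intro x hx
    rw [interior_Ioo] at hx
    rw [(key x hx).1.deriv]
    exact (key x hx).2
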